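/- Let f = Σ_{n≥0} aₙxⁿ be a convergent real formal power series and let u, v, b ∈ ℝ. Then the Newton integral of the shifted series f(x+b) from u to v equals the Newton integral of f from u+b to v+b: Σ_{n≥0} cₙ·(v^{n+1} − u^{n+1})/(n+1) = Σ_{n≥0} aₙ·((v+b)^{n+1} − (u+b)^{n+1})/(n+1), where cₙ = Σ_{m≥n} C(m,n)·aₘ·b^{m−n} are the coefficients of f(x+b). -/

import Mathlib

open Filter

private lemma sigma_fin_eq {k l : ℕ} (h : k = l) (n : Fin (k+1)) (m : Fin (l+1))
    (h2 : (n:ℕ) = (m:ℕ)) : (⟨k, n⟩ : Σ k, Fin (k+1)) = ⟨l, m⟩ := by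
  subst h; simp_all [Fin.ext_iff]

private def diagEquiv : (Σ k : ℕ, Fin (k+1)) ≃ ℕ × ℕ where
  toFun x := (x.2.1, x.1 - x.2.1)
  invFun p := ⟨p.1 + p.2, ⟨p.1, by omega⟩⟩
  left_inv := by
    rintro ⟨k, ⟨n, hn⟩⟩
    show (⟨n + (k - n), ⟨n, by omega⟩⟩ : Σ k, Fin (k+1)) = ⟨k, ⟨n, hn⟩⟩
    exact sigma_fin_eq (by omega) _ _ rfl
  right_inv := by rintro ⟨n, m⟩; simp

private lemma summable_abs_pow (a : ℕ → ℝ)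
    (hconv : ∀ c : ℝ, Filter.Tendsto (fun n : ℕ => a n * c ^ n) Filter.atTop (nhds 0))
    {r : ℝ} (hr : 0 ≤ r) : Summable (fun k => |a k| * r ^ k) := by
  have hc : (0:ℝ) < 2*r + 1 := by linarith
  have h1 : Filter.Tendsto (fun n : ℕ => |a n * (2*r+1) ^ n|) atTop (nhds 0) := by
    simpa using (hconv (2*r+1)).abs
  have hev : ∀ᶠ n in atTop, |a n * (2*r+1) ^ n| < 1 := h1.eventually (gt_mem_nhds one_pos)
  have hrc : r / (2*r+1) < 1 := by rw [div_lt_one hc]; linarith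
  refine Summable.of_norm_bounded_eventually_nat (g := fun n => (r/(2*r+1))^n)
    (summable_geometric_of_lt_one (by positivity) hrc) ?_
  filter_upwards [hev] with n hn
  have hrw : r = (2*r+1) * (r/(2*r+1)) := by field_simp
  have : |a n| * r ^ n = |a n * (2*r+1)^n| * (r/(2*r+1))^n := by
    rw [abs_mul, abs_pow, abs_of_pos hc, mul_assoc, ← mul_pow, ← hrw]
  rw [Real.norm_eq_abs, abs_of_nonneg (by positivity : (0:ℝ) ≤ |a n| * r ^ n), this]
  calc |a n * (2*r+1)^n| * (r/(2*r+1))^n ≤ 1 * (r/(2*r+1))^n := by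
        apply mul_le_mul_of_nonneg_right hn.le (by positivity)
    _ = (r/(2*r+1))^n := one_mul _

private lemma finsum_shift (k : ℕ) (A t b : ℝ) :
    ∑ n ∈ Finset.range (k+1), (k.choose n : ℝ) * A * b ^ (k - n) * t ^ (n+1) / ((n:ℝ)+1)
      = A * ((t + b) ^ (k+1) - b ^ (k+1)) / ((k:ℝ)+1) := by
  have hexp : (t + b) ^ (k+1) - b ^ (k+1)
      = ∑ j ∈ Finset.range (k+1), t ^ (j+1) * b ^ (k-j) * (((k+1).choose (j+1) : ℕ) : ℝ) := by
    rw [add_pow, Finset.sum_range_succ' (fun j => t ^ j * b ^ (k+1-j) * (((k+1).choose j : ℕ) : ℝ)) (k+1)]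
    simp [Nat.succ_sub_succ]
  rw [hexp, Finset.mul_sum, Finset.sum_div]
  refine Finset.sum_congr rfl fun n hn => ?_
  have hnat : ((k:ℝ)+1) * (k.choose n : ℝ) = ((k+1).choose (n+1) : ℝ) * ((n:ℝ)+1) := by
    exact_mod_cast Nat.add_one_mul_choose_eq k n
  have h1 : ((n:ℝ)+1) ≠ 0 := by positivity
  have h2 : ((k:ℝ)+1) ≠ 0 := by positivity
  field_simp
  linear_combination (A * b ^ (k - n) * t ^ (n+1)) * hnat

private noncomputable def Fm (a : ℕ → ℝ) (b t : ℝ) : ℕ × ℕ → ℝ := fun p =>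
  ((p.2 + p.1).choose p.1 : ℝ) * a (p.2 + p.1) * b ^ p.2 * t ^ (p.1 + 1) / ((p.1 : ℝ) + 1)

private lemma Fm_comp (a : ℕ → ℝ) (b t : ℝ) (k : ℕ) (n : Fin (k+1)) :
    Fm a b t (diagEquiv ⟨k, n⟩)
      = (k.choose n : ℝ) * a k * b ^ (k - (n:ℕ)) * t ^ ((n:ℕ)+1) / ((n:ℝ)+1) := by
  have h : (k - (n:ℕ)) + (n:ℕ) = k := by omega
  simp [Fm, diagEquiv, h]

private lemma Fm_comp_abs (a : ℕ → ℝ) (b t : ℝ) (k : ℕ) (n : Fin (k+1)) :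
    |Fm a b t (diagEquiv ⟨k, n⟩)|
      = (k.choose n : ℝ) * |a k| * |b| ^ (k - (n:ℕ)) * |t| ^ ((n:ℕ)+1) / ((n:ℝ)+1) := by
  rw [Fm_comp, abs_div, abs_mul, abs_mul, abs_mul, abs_pow, abs_pow,
    abs_of_nonneg (by positivity : (0:ℝ) ≤ (k.choose (n:ℕ) : ℝ)),
    abs_of_pos (by positivity : (0:ℝ) < ((n:ℕ):ℝ)+1)]

private lemma summable_Fm (a : ℕ → ℝ)
    (hconv : ∀ c : ℝ, Filter.Tendsto (fun n : ℕ => a n * c ^ n) Filter.atTop (nhds 0))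
    (b t : ℝ) : Summable (Fm a b t) := by
  have hG : Summable (fun x : Σ k : ℕ, Fin (k+1) => |Fm a b t (diagEquiv x)|) := by
    rw [summable_sigma_of_nonneg (fun x => abs_nonneg _)]
    refine ⟨fun k => Summable.of_finite, ?_⟩
    have hfib : ∀ k : ℕ, (∑' n : Fin (k+1), |Fm a b t (diagEquiv ⟨k, n⟩)|)
        = |a k| * ((|t| + |b|) ^ (k+1) - |b| ^ (k+1)) / ((k:ℝ)+1) := by
      intro k
      rw [tsum_fintype, ← finsum_shift k |a k| |t| |b|, ← Fin.sum_univ_eq_sum_range]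
      exact Finset.sum_congr rfl fun n _ => Fm_comp_abs a b t k n
    refine Summable.of_nonneg_of_le
      (fun k => tsum_nonneg fun n => abs_nonneg _) (fun k => ?_)
      (((summable_abs_pow a hconv (by positivity : (0:ℝ) ≤ |t| + |b|)).mul_right (|t| + |b|)))
    rw [hfib k]
    have hbb : |b| ^ (k+1) ≤ (|t| + |b|) ^ (k+1) :=
      pow_le_pow_left₀ (abs_nonneg b) (by linarith [abs_nonneg t]) _
    calc |a k| * ((|t| + |b|) ^ (k+1) - |b| ^ (k+1)) / ((k:ℝ)+1)
        ≤ |a k| * ((|t| + |b|) ^ (k+1) - |b| ^ (k+1)) :=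
          div_le_self (mul_nonneg (abs_nonneg _) (by linarith))
            (by exact_mod_cast Nat.le_add_left 1 k)
      _ ≤ |a k| * (|t| + |b|) ^ (k+1) := by
          apply mul_le_mul_of_nonneg_left _ (abs_nonneg _)
          linarith [pow_nonneg (abs_nonneg b) (k+1)]
      _ = |a k| * (|t| + |b|) ^ k * (|t| + |b|) := by rw [pow_succ]; ring
  exact diagEquiv.summable_iff.1 ((Summable.of_abs hG))

private lemma inner_eq (a : ℕ → ℝ) (b t : ℝ) (n : ℕ) :
    (∑' m : ℕ, ((m + n).choose n : ℝ) * a (m + n) * b ^ m) * t ^ (n + 1) / ((n : ℝ) + 1)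
      = ∑' m : ℕ, Fm a b t (n, m) := by
  simp only [Fm, div_eq_mul_inv, ← tsum_mul_right]

private lemma summable_outer (a : ℕ → ℝ)
    (hconv : ∀ c : ℝ, Filter.Tendsto (fun n : ℕ => a n * c ^ n) Filter.atTop (nhds 0))
    (b t : ℝ) :
    Summable (fun n : ℕ => (∑' m : ℕ, ((m + n).choose n : ℝ) * a (m + n) * b ^ m) *
      t ^ (n + 1) / ((n : ℝ) + 1)) := by
  have hF := summable_Fm a hconv b t
  refine Summable.congr ?_ (fun n => (inner_eq a b t n).symm)
  exact (hF.hasSum.prod_fiberwise (fun n => (hF.prod_factor n).hasSum)).summable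

private lemma core (a : ℕ → ℝ)
    (hconv : ∀ c : ℝ, Filter.Tendsto (fun n : ℕ => a n * c ^ n) Filter.atTop (nhds 0))
    (b t : ℝ) :
    (∑' n : ℕ, (∑' m : ℕ, ((m + n).choose n : ℝ) * a (m + n) * b ^ m) *
        t ^ (n + 1) / ((n : ℝ) + 1))
      = ∑' k : ℕ, a k * ((t + b) ^ (k+1) - b ^ (k+1)) / ((k:ℝ)+1) := by
  have hF := summable_Fm a hconv b t
  calc (∑' n : ℕ, (∑' m : ℕ, ((m + n).choose n : ℝ) * a (m + n) * b ^ m) *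
        t ^ (n + 1) / ((n : ℝ) + 1))
      = ∑' n : ℕ, ∑' m : ℕ, Fm a b t (n, m) := tsum_congr (inner_eq a b t)
    _ = ∑' p : ℕ × ℕ, Fm a b t p := (Summable.tsum_prod' hF (fun n => hF.prod_factor n)).symm
    _ = ∑' x : Σ k : ℕ, Fin (k+1), Fm a b t (diagEquiv x) :=
        (diagEquiv.tsum_eq (Fm a b t)).symm
    _ = ∑' k : ℕ, ∑' n : Fin (k+1), Fm a b t (diagEquiv ⟨k, n⟩) :=
        Summable.tsum_sigma' (fun k => Summable.of_finite) (diagEquiv.summable_iff.2 hF)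
    _ = ∑' k : ℕ, a k * ((t + b) ^ (k+1) - b ^ (k+1)) / ((k:ℝ)+1) := by
        refine tsum_congr fun k => ?_
        rw [tsum_fintype, ← finsum_shift k (a k) t b, ← Fin.sum_univ_eq_sum_range]
        exact Finset.sum_congr rfl fun n _ => Fm_comp a b t k n

private lemma summable_T (a : ℕ → ℝ)
    (hconv : ∀ c : ℝ, Filter.Tendsto (fun n : ℕ => a n * c ^ n) Filter.atTop (nhds 0))
    (b t : ℝ) :
    Summable (fun k : ℕ => a k * ((t + b) ^ (k+1) - b ^ (k+1)) / ((k:ℝ)+1)) := by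
  refine Summable.of_norm_bounded
    (g := fun k => |a k| * (|t + b| ^ k * |t + b| + |b| ^ k * |b|)) ?_ (fun k => ?_)
  · refine Summable.congr (f := fun k => |a k| * |t + b| ^ k * |t + b| + |a k| * |b| ^ k * |b|)
      ?_ (fun k => by ring)
    exact ((summable_abs_pow a hconv (abs_nonneg (t+b))).mul_right _).add
      ((summable_abs_pow a hconv (abs_nonneg b)).mul_right _)
  · rw [Real.norm_eq_abs, abs_div, abs_mul, abs_of_pos (by positivity : (0:ℝ) < (k:ℝ)+1)]
    have h1 : |(t + b) ^ (k+1) - b ^ (k+1)| ≤ |t + b| ^ (k+1) + |b| ^ (k+1) := by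
      calc |(t + b) ^ (k+1) - b ^ (k+1)| ≤ |(t + b) ^ (k+1)| + |b ^ (k+1)| := abs_sub _ _
        _ = |t + b| ^ (k+1) + |b| ^ (k+1) := by rw [abs_pow, abs_pow]
    calc |a k| * |(t + b) ^ (k+1) - b ^ (k+1)| / ((k:ℝ)+1)
        ≤ |a k| * |(t + b) ^ (k+1) - b ^ (k+1)| :=
          div_le_self (by positivity) (by exact_mod_cast Nat.le_add_left 1 k)
      _ ≤ |a k| * (|t + b| ^ (k+1) + |b| ^ (k+1)) :=
          mul_le_mul_of_nonneg_left h1 (abs_nonneg _)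
      _ = |a k| * (|t + b| ^ k * |t + b| + |b| ^ k * |b|) := by
          rw [pow_succ, pow_succ]

/-- For convergent `f = Σ aₙxⁿ` and `u, v, b ∈ ℝ`, the Newton integral of the
shifted series `f(x+b)` from `u` to `v` equals the Newton integral of `f`
from `u+b` to `v+b`:
`Σₙ cₙ·(v^{n+1} − u^{n+1})/(n+1) = Σₙ aₙ·((v+b)^{n+1} − (u+b)^{n+1})/(n+1)`,
where `cₙ = Σ_{m≥n} C(m,n)·aₘ·b^{m−n}`. -/
theorem newton_integral_shift (a : ℕ → ℝ)
    (hconv : ∀ c : ℝ, Filter.Tendsto (fun n : ℕ => a n * c ^ n) Filter.atTop (nhds 0))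
    (u v b : ℝ) :
    (∑' n : ℕ, (∑' m : ℕ, ((m + n).choose n : ℝ) * a (m + n) * b ^ m) *
        (v ^ (n + 1) - u ^ (n + 1)) / ((n : ℝ) + 1))
      = ∑' n : ℕ, a n * ((v + b) ^ (n + 1) - (u + b) ^ (n + 1)) / ((n : ℝ) + 1) := by
  have hSv := summable_outer a hconv b v
  have hSu := summable_outer a hconv b u
  have hTv := summable_T a hconv b v
  have hTu := summable_T a hconv b u
  calc (∑' n : ℕ, (∑' m : ℕ, ((m + n).choose n : ℝ) * a (m + n) * b ^ m) *
        (v ^ (n + 1) - u ^ (n + 1)) / ((n : ℝ) + 1))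
      = ∑' n : ℕ, ((∑' m : ℕ, ((m + n).choose n : ℝ) * a (m + n) * b ^ m) *
          v ^ (n + 1) / ((n : ℝ) + 1)
        - (∑' m : ℕ, ((m + n).choose n : ℝ) * a (m + n) * b ^ m) *
          u ^ (n + 1) / ((n : ℝ) + 1)) := tsum_congr fun n => by ring
    _ = (∑' n : ℕ, (∑' m : ℕ, ((m + n).choose n : ℝ) * a (m + n) * b ^ m) *
          v ^ (n + 1) / ((n : ℝ) + 1))
        - ∑' n : ℕ, (∑' m : ℕ, ((m + n).choose n : ℝ) * a (m + n) * b ^ m) *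
          u ^ (n + 1) / ((n : ℝ) + 1) := Summable.tsum_sub hSv hSu
    _ = (∑' k : ℕ, a k * ((v + b) ^ (k+1) - b ^ (k+1)) / ((k:ℝ)+1))
        - ∑' k : ℕ, a k * ((u + b) ^ (k+1) - b ^ (k+1)) / ((k:ℝ)+1) := by
        rw [core a hconv b v, core a hconv b u]
    _ = ∑' k : ℕ, (a k * ((v + b) ^ (k+1) - b ^ (k+1)) / ((k:ℝ)+1)
        - a k * ((u + b) ^ (k+1) - b ^ (k+1)) / ((k:ℝ)+1)) := (Summable.tsum_sub hTv hTu).symm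
    _ = ∑' n : ℕ, a n * ((v + b) ^ (n + 1) - (u + b) ^ (n + 1)) / ((n : ℝ) + 1) :=
        tsum_congr fun k => by ring
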